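/- Let p(c, x₁) be a real polynomial of degree n ≥ 1 in c, with leading coefficient pₙ(x₁) and resultant Rₙ = Res(p, ∂p/∂c; c) ≢ 0. Let α be the largest positive real root of pₙ and suppose that: (i) there exists α_k > α, a real root of Rₙ, such that no point (c, x₁) of the curve p = 0 with c ∈ J has x₁ ≥ α_k (i.e., the bound of the first part holds with bound α_k); (ii) for every real root γ of Rₙ with γ ∈ [α, α_k], the equation p(c, γ) = 0 has no solution c ∈ J; (iii) if J = [0, ∞), the univariate polynomial p(0, x₁) has no real root greater than α. Then every point (c, x₁) on the curve p = 0 with c ∈ J satisfies x₁ ≤ α. -/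

import Mathlib

open Polynomial Filter
open Topology

/-- The Sylvester matrix of `f` and `g`, viewed as polynomials of formal degrees
`m` and `k` respectively: `k` shifted rows of coefficients of `f` followed by
`m` shifted rows of coefficients of `g`. -/
noncomputable def sylvester {R : Type*} [CommRing R] (m k : ℕ) (f g : Polynomial R) :
    Matrix (Fin (k + m)) (Fin (k + m)) R :=
  Matrix.of fun i j =>
    if (i : ℕ) < k then (if (i : ℕ) ≤ (j : ℕ) then f.coeff ((j : ℕ) - (i : ℕ)) else 0)
    else (if (i : ℕ) - k ≤ (j : ℕ) then g.coeff ((j : ℕ) - ((i : ℕ) - k)) else 0)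

/-- The resultant of `f` and `g` with formal degrees `m` and `k`. -/
noncomputable def resultant {R : Type*} [CommRing R] (m k : ℕ) (f g : Polynomial R) : R :=
  (sylvester m k f g).det

/-- Evaluation at `(c, x)` of a bivariate polynomial `p ∈ ℝ[x][c]`
(outer variable `c`, coefficients in `ℝ[x]`). -/
noncomputable def evalCX (c x : ℝ) (p : Polynomial (Polynomial ℝ)) : ℝ :=
  (p.map (Polynomial.evalRingHom x)).eval c

lemma sylvester_map {R S : Type*} [CommRing R] [CommRing S] (φ : R →+* S) (m k : ℕ)
    (f g : Polynomial R) :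
    (sylvester m k f g).map φ = sylvester m k (f.map φ) (g.map φ) := by
  ext i j
  simp only [_root_.sylvester, Matrix.map_apply, Matrix.of_apply, Polynomial.coeff_map]
  split_ifs <;> simp

lemma eval_resultant (m k : ℕ) (f g : Polynomial (Polynomial ℝ)) (x : ℝ) :
    (resultant m k f g).eval x
      = resultant m k (f.map (Polynomial.evalRingHom x)) (g.map (Polynomial.evalRingHom x)) := by
  have h := RingHom.map_det (Polynomial.evalRingHom x) (sylvester m k f g)
  rw [_root_.resultant, _root_.resultant, ← sylvester_map]
  exact h

lemma row_sum_eq_zero (f : Polynomial ℝ) (N t : ℕ) (hf : f.natDegree < N - t) (c : ℝ)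
    (hfc : f.eval c = 0) :
    ∑ j ∈ Finset.range N, (if t ≤ j then f.coeff (j - t) else 0) * c ^ j = 0 := by
  rw [← Finset.sum_subset (s₁ := Finset.Ico t N)
      (by intro y hy; simp only [Finset.mem_Ico] at hy; simp [hy.2])
      (by intro y hy hy'
          simp only [Finset.mem_range] at hy
          simp only [Finset.mem_Ico, not_and, not_le] at hy'
          rw [if_neg (by omega), zero_mul])]
  rw [Finset.sum_Ico_eq_sum_range]
  have : ∀ d ∈ Finset.range (N - t),
      (if t ≤ t + d then f.coeff (t + d - t) else 0) * c ^ (t + d)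
        = c ^ t * (f.coeff d * c ^ d) := by
    intro d _
    rw [if_pos (Nat.le_add_right _ _), Nat.add_sub_cancel_left, pow_add]
    ring
  rw [Finset.sum_congr rfl this, ← Finset.mul_sum, ← Polynomial.eval_eq_sum_range' hf, hfc,
    mul_zero]

lemma resultant_eq_zero_of_common_root {m k : ℕ} (hmk : 0 < k + m) (f g : Polynomial ℝ)
    (hf : f.natDegree ≤ m) (hg : g.natDegree ≤ k) (c : ℝ)
    (hfc : f.eval c = 0) (hgc : g.eval c = 0) : resultant m k f g = 0 := by
  rw [_root_.resultant, ← Matrix.exists_mulVec_eq_zero_iff]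
  refine ⟨fun j => c ^ (j : ℕ), ?_, ?_⟩
  · intro h
    have h0 := congrFun h ⟨0, hmk⟩
    simp at h0
  · funext i
    rw [Matrix.mulVec, dotProduct]
    show ∑ j : Fin (k + m),
        (fun jn : ℕ => (if (i : ℕ) < k then (if (i : ℕ) ≤ jn then f.coeff (jn - (i : ℕ)) else 0)
          else (if (i : ℕ) - k ≤ jn then g.coeff (jn - ((i : ℕ) - k)) else 0)) * c ^ jn)
          ((j : Fin (k+m)) : ℕ) = 0
    rw [Fin.sum_univ_eq_sum_range
      (fun jn : ℕ => (if (i : ℕ) < k then (if (i : ℕ) ≤ jn then f.coeff (jn - (i : ℕ)) else 0)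
        else (if (i : ℕ) - k ≤ jn then g.coeff (jn - ((i : ℕ) - k)) else 0)) * c ^ jn) (k + m)]
    by_cases hik : (i : ℕ) < k
    · simp only [if_pos hik]
      exact row_sum_eq_zero f (k + m) (i : ℕ) (by omega) c hfc
    · simp only [if_neg hik]
      have hik' : (i : ℕ) - k < m := by have := i.isLt; omega
      exact row_sum_eq_zero g (k + m) ((i : ℕ) - k) (by omega) c hgc

lemma root_abs_bound (q : Polynomial ℝ) (n : ℕ) (hn : 1 ≤ n) (hq : q.natDegree ≤ n)
    (c : ℝ) (hc : q.eval c = 0) (h1 : 1 ≤ |c|) :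
    |q.coeff n| * |c| ≤ ∑ i ∈ Finset.range n, |q.coeff i| := by
  have he : q.eval c = ∑ i ∈ Finset.range (n + 1), q.coeff i * c ^ i :=
    Polynomial.eval_eq_sum_range' (lt_of_le_of_lt hq (Nat.lt_succ_self n)) c
  rw [hc, Finset.sum_range_succ] at he
  have hmain : q.coeff n * c ^ n = -∑ i ∈ Finset.range n, q.coeff i * c ^ i := by linarith
  have hcpos : (0 : ℝ) < |c| ^ (n - 1) := pow_pos (lt_of_lt_of_le one_pos h1) _
  have habs : |q.coeff n| * |c| ^ n ≤ (∑ i ∈ Finset.range n, |q.coeff i|) * |c| ^ (n - 1) := by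
    calc |q.coeff n| * |c| ^ n = |q.coeff n * c ^ n| := by rw [abs_mul, abs_pow]
    _ = |∑ i ∈ Finset.range n, q.coeff i * c ^ i| := by rw [hmain, abs_neg]
    _ ≤ ∑ i ∈ Finset.range n, |q.coeff i * c ^ i| := Finset.abs_sum_le_sum_abs _ _
    _ ≤ ∑ i ∈ Finset.range n, |q.coeff i| * |c| ^ (n - 1) := by
        apply Finset.sum_le_sum
        intro i hi
        rw [abs_mul, abs_pow]
        exact mul_le_mul_of_nonneg_left
          (pow_le_pow_right₀ h1 (by simp only [Finset.mem_range] at hi; omega))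
          (abs_nonneg _)
    _ = (∑ i ∈ Finset.range n, |q.coeff i|) * |c| ^ (n - 1) := by rw [Finset.sum_mul]
  have hpow : |c| ^ n = |c| * |c| ^ (n - 1) := by
    conv_lhs => rw [show n = 1 + (n - 1) by omega]
    rw [pow_add, pow_one]
  rw [hpow, ← mul_assoc] at habs
  exact le_of_mul_le_mul_right habs hcpos

lemma evalCX_eq_sum (p : Polynomial (Polynomial ℝ)) (c x : ℝ) :
    evalCX c x p = ∑ i ∈ Finset.range (p.natDegree + 1), (p.coeff i).eval x * c ^ i := by
  rw [evalCX, Polynomial.eval_map, Polynomial.eval₂_eq_sum_range]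
  rfl

lemma continuous_evalCX (p : Polynomial (Polynomial ℝ)) :
    Continuous (fun cx : ℝ × ℝ => evalCX cx.1 cx.2 p) := by
  have h : (fun cx : ℝ × ℝ => evalCX cx.1 cx.2 p)
      = fun cx : ℝ × ℝ =>
          ∑ i ∈ Finset.range (p.natDegree + 1), (p.coeff i).eval cx.2 * cx.1 ^ i := by
    funext cx; exact evalCX_eq_sum p cx.1 cx.2
  rw [h]
  exact continuous_finset_sum _ fun i _ =>
    (((p.coeff i).continuous).comp continuous_snd).mul (continuous_fst.pow i)

/-- second part of the main theorem: with `α` the largest positive real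
root of the leading coefficient `pₙ`, `α_k > α` a real root of the resultant `Rₙ` such
that the bound `x₁ < α_k` already holds on the curve over `J`, if no root `γ` of `Rₙ`
in `[α, α_k]` has a fiber meeting `J`, and (when `J = [0, ∞)`) `p(0, ·)` has no real
root greater than `α`, then every point `(c, x₁)` of the curve with `c ∈ J` satisfies
`x₁ ≤ α`. -/
theorem statement5 (p : Polynomial (Polynomial ℝ)) (n : ℕ) (hn : 1 ≤ n)
    (hdeg : p.natDegree = n)
    (R : Polynomial ℝ) (hRdef : R = resultant n (n - 1) p (Polynomial.derivative p))
    (hR0 : R ≠ 0)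
    (J : Set ℝ) (hJ : J = Set.univ ∨ J = Set.Ici (0 : ℝ))
    (α : ℝ) (hαpos : 0 < α) (hαroot : p.leadingCoeff.eval α = 0)
    (hαmax : ∀ γ : ℝ, 0 < γ → p.leadingCoeff.eval γ = 0 → γ ≤ α)
    (αk : ℝ) (hαk : R.eval αk = 0) (hααk : α < αk)
    (hbound : ∀ c ∈ J, ∀ x : ℝ, evalCX c x p = 0 → x < αk)
    (hγ : ∀ γ ∈ Set.Icc α αk, R.eval γ = 0 → ∀ c ∈ J, evalCX c γ p ≠ 0)
    (h0 : J = Set.Ici (0 : ℝ) → ∀ x : ℝ, α < x → evalCX 0 x p ≠ 0) :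
    ∀ c ∈ J, ∀ x : ℝ, evalCX c x p = 0 → x ≤ α := by
  by_contra hcon
  push_neg at hcon
  obtain ⟨c₀, hc₀J, x₀, hFx₀, hx₀α⟩ := hcon
  have hJclosed : IsClosed J := by
    rcases hJ with h | h
    · rw [h]; exact isClosed_univ
    · rw [h]; exact isClosed_Ici
  have contF := continuous_evalCX p
  have hlead : ∀ x : ℝ, α < x → p.leadingCoeff.eval x ≠ 0 := fun x hx h =>
    absurd (hαmax x (hαpos.trans hx) h) (not_le.mpr hx)
  -- common root of fiber and its derivative forces R to vanish
  have hres : ∀ c x : ℝ, evalCX c x p = 0 → evalCX c x (Polynomial.derivative p) = 0 →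
      R.eval x = 0 := by
    intro c x h1 h2
    rw [hRdef, eval_resultant]
    exact resultant_eq_zero_of_common_root (by omega) _ _
      (le_trans Polynomial.natDegree_map_le (le_of_eq hdeg))
      (le_trans Polynomial.natDegree_map_le
        (le_trans (Polynomial.natDegree_derivative_le p) (by omega))) c h1 h2
  have hx₀αk : x₀ < αk := hbound c₀ hc₀J x₀ hFx₀
  set I := Set.Icc x₀ αk with hI
  have hIc : IsCompact I := isCompact_Icc
  have hIne : I.Nonempty := ⟨x₀, le_refl _, hx₀αk.le⟩
  -- lower bound δ on |pₙ| over I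
  obtain ⟨y, hyI, hymin⟩ := hIc.exists_isMinOn hIne
    ((continuous_abs.comp (p.leadingCoeff.continuous)).continuousOn)
  set δ := |p.leadingCoeff.eval y| with hδ
  have hδpos : 0 < δ := abs_pos.mpr (hlead y (lt_of_lt_of_le hx₀α hyI.1))
  have hδle : ∀ x ∈ I, δ ≤ |p.leadingCoeff.eval x| := fun x hx => hymin hx
  -- upper bound M on sum of |coefficients| over I
  obtain ⟨z, hzI, hzmax⟩ := hIc.exists_isMaxOn hIne
    (f := fun x => ∑ i ∈ Finset.range n, |(p.coeff i).eval x|)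
    (continuousOn_finset_sum _ fun i _ =>
      (continuous_abs.comp (p.coeff i).continuous).continuousOn)
  set M := ∑ i ∈ Finset.range n, |(p.coeff i).eval z| with hM
  set B := max 1 (M / δ) with hB
  have hrootB : ∀ x ∈ I, ∀ c : ℝ, evalCX c x p = 0 → |c| ≤ B := by
    intro x hx c hc
    rcases le_or_gt |c| 1 with h1 | h1
    · exact le_trans h1 (le_max_left _ _)
    have hb := root_abs_bound (p.map (Polynomial.evalRingHom x)) n hn
      (le_trans Polynomial.natDegree_map_le (le_of_eq hdeg)) c hc h1.le
    have hcoeffn : (p.map (Polynomial.evalRingHom x)).coeff n = p.leadingCoeff.eval x := by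
      rw [Polynomial.coeff_map, Polynomial.leadingCoeff, hdeg]; rfl
    have hsum : ∑ i ∈ Finset.range n, |(p.map (Polynomial.evalRingHom x)).coeff i|
        = ∑ i ∈ Finset.range n, |(p.coeff i).eval x| := by
      refine Finset.sum_congr rfl fun i _ => ?_
      rw [Polynomial.coeff_map]; rfl
    rw [hcoeffn, hsum] at hb
    have hMx : (∑ i ∈ Finset.range n, |(p.coeff i).eval x|) ≤ M := hzmax hx
    have hδx : δ ≤ |p.leadingCoeff.eval x| := hδle x hx
    have hcnn : 0 ≤ |c| := abs_nonneg c
    have : δ * |c| ≤ M :=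
      le_trans (mul_le_mul_of_nonneg_right hδx hcnn) (le_trans hb hMx)
    have : |c| ≤ M / δ := (le_div_iff₀' hδpos).mpr this
    exact le_trans this (le_max_right _ _)
  set S : Set ℝ := {x | x ∈ I ∧ ∃ c ∈ J, evalCX c x p = 0} with hS
  have hSne : S.Nonempty := ⟨x₀, ⟨le_refl _, hx₀αk.le⟩, c₀, hc₀J, hFx₀⟩
  have hScomp : IsCompact S := by
    have himg : S = Prod.snd '' (((Set.Icc (-B) B ∩ J) ×ˢ I) ∩
        {cx : ℝ × ℝ | evalCX cx.1 cx.2 p = 0}) := by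
      ext x
      constructor
      · rintro ⟨hxI, c, hcJ, hc⟩
        exact ⟨(c, x), ⟨⟨⟨Set.mem_Icc.mpr (abs_le.mp (hrootB x hxI c hc)), hcJ⟩, hxI⟩, hc⟩, rfl⟩
      · rintro ⟨⟨c, x'⟩, ⟨⟨⟨_, hcJ⟩, hxI⟩, hc⟩, rfl⟩
        exact ⟨hxI, c, hcJ, hc⟩
    rw [himg]
    exact (((isCompact_Icc.inter_right hJclosed).prod isCompact_Icc).inter_right
      (isClosed_eq contF continuous_const)).image continuous_snd
  set β := sSup S with hβ
  have hβS : β ∈ S := hScomp.sSup_mem hSne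
  obtain ⟨⟨hβx₀, hβαk⟩, cs, hcsJ, hcs⟩ := hβS
  have hβα : α < β := lt_of_lt_of_le hx₀α hβx₀
  have hβltαk : β < αk := hbound cs hcsJ β hcs
  have hRβ : R.eval β ≠ 0 := fun h => hγ β ⟨hβα.le, hβαk⟩ h cs hcsJ hcs
  -- cs is a simple root of the fiber at β
  set qd := (Polynomial.derivative p).map (Polynomial.evalRingHom β) with hqddef
  have hqdcs : qd.eval cs ≠ 0 := fun h => hRβ (hres cs β hcs h)
  have hU : IsOpen {y : ℝ | 0 < qd.eval cs * qd.eval y} :=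
    isOpen_lt continuous_const (continuous_const.mul qd.continuous)
  obtain ⟨ε₁, hε₁, hball⟩ := Metric.isOpen_iff.mp hU cs (mul_self_pos.mpr hqdcs)
  have hcs0 : J = Set.Ici (0 : ℝ) → 0 < cs := by
    intro hJ'
    have hcs' : cs ∈ Set.Ici (0 : ℝ) := hJ' ▸ hcsJ
    rcases (Set.mem_Ici.mp hcs').lt_or_eq with h | h
    · exact h
    · exact absurd hcs (h ▸ h0 hJ' β hβα)
  obtain ⟨ε, hεpos, hεlt, hεJ⟩ :
      ∃ ε : ℝ, 0 < ε ∧ ε < ε₁ ∧ Set.Icc (cs - ε) (cs + ε) ⊆ J := by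
    rcases hJ with hJ' | hJ'
    · exact ⟨ε₁ / 2, by positivity, by linarith, by simp [hJ']⟩
    · refine ⟨min (ε₁ / 2) cs, lt_min (by positivity) (hcs0 hJ'), ?_, ?_⟩
      · exact lt_of_le_of_lt (min_le_left _ _) (by linarith)
      · intro t ht
        rw [hJ']
        have h1 := ht.1
        have h2 : min (ε₁ / 2) cs ≤ cs := min_le_right _ _
        simp only [Set.mem_Ici]
        linarith
  have hIccball : Set.Icc (cs - ε) (cs + ε) ⊆ Metric.ball cs ε₁ := by
    intro t ht
    rw [Metric.mem_ball, Real.dist_eq]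
    exact lt_of_le_of_lt (abs_le.mpr ⟨by linarith [ht.1], by linarith [ht.2]⟩) hεlt
  have hsign : ∀ t ∈ Set.Icc (cs - ε) (cs + ε), 0 < qd.eval cs * qd.eval t :=
    fun t ht => hball (hIccball ht)
  set q := p.map (Polynomial.evalRingHom β) with hqdef
  have hqcs : q.eval cs = 0 := hcs
  have hderivq : ∀ t : ℝ, deriv (fun s => q.eval s) t = qd.eval t := by
    intro t
    rw [Polynomial.deriv]
    congr 1
    rw [hqdef, hqddef, Polynomial.derivative_map]
  -- sign change of the fiber at β across cs
  have hprod : q.eval (cs - ε) * q.eval (cs + ε) < 0 := by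
    have hmeml : cs - ε ∈ Set.Icc (cs - ε) (cs + ε) := ⟨le_refl _, by linarith⟩
    have hmemr : cs + ε ∈ Set.Icc (cs - ε) (cs + ε) := ⟨by linarith, le_refl _⟩
    have hmemc : cs ∈ Set.Icc (cs - ε) (cs + ε) := ⟨by linarith, by linarith⟩
    rcases hqdcs.lt_or_gt with hneg | hpos
    · have hanti : StrictAntiOn (fun s => q.eval s) (Set.Icc (cs - ε) (cs + ε)) := by
        apply strictAntiOn_of_deriv_neg (convex_Icc _ _) q.continuous.continuousOn
        intro t ht
        rw [interior_Icc] at ht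
        rw [hderivq]
        nlinarith [hsign t ⟨ht.1.le, ht.2.le⟩]
      have h1 : 0 < q.eval (cs - ε) := by
        have := hanti hmeml hmemc (by linarith)
        simpa [hqcs] using this
      have h2 : q.eval (cs + ε) < 0 := by
        have := hanti hmemc hmemr (by linarith)
        simpa [hqcs] using this
      exact mul_neg_of_pos_of_neg h1 h2
    · have hmono : StrictMonoOn (fun s => q.eval s) (Set.Icc (cs - ε) (cs + ε)) := by
        apply strictMonoOn_of_deriv_pos (convex_Icc _ _) q.continuous.continuousOn
        intro t ht
        rw [interior_Icc] at ht
        rw [hderivq]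
        nlinarith [hsign t ⟨ht.1.le, ht.2.le⟩]
      have h1 : q.eval (cs - ε) < 0 := by
        have := hmono hmeml hmemc (by linarith)
        simpa [hqcs] using this
      have h2 : 0 < q.eval (cs + ε) := by
        have := hmono hmemc hmemr (by linarith)
        simpa [hqcs] using this
      exact mul_neg_of_neg_of_pos h1 h2
  -- pick x slightly above β keeping the sign change
  have hcontd : Continuous fun x : ℝ => evalCX (cs - ε) x p * evalCX (cs + ε) x p := by
    have h1 : Continuous fun x : ℝ => evalCX (cs - ε) x p :=
      contF.comp (continuous_const.prodMk continuous_id)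
    have h2 : Continuous fun x : ℝ => evalCX (cs + ε) x p :=
      contF.comp (continuous_const.prodMk continuous_id)
    exact h1.mul h2
  have hopen : IsOpen {x : ℝ | evalCX (cs - ε) x p * evalCX (cs + ε) x p < 0} :=
    isOpen_lt hcontd continuous_const
  have hβmem' : β ∈ {x : ℝ | evalCX (cs - ε) x p * evalCX (cs + ε) x p < 0} := hprod
  have hmem1 : {x : ℝ | evalCX (cs - ε) x p * evalCX (cs + ε) x p < 0} ∈ 𝓝[>] β :=
    nhdsWithin_le_nhds (hopen.mem_nhds hβmem')
  have hmem2 : Set.Ioo β αk ∈ 𝓝[>] β := Ioo_mem_nhdsGT_of_mem ⟨le_refl β, hβltαk⟩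
  obtain ⟨x, hx1, hx2⟩ := Filter.nonempty_of_mem (Filter.inter_mem hmem1 hmem2)
  -- IVT at x gives a root in J
  have hab : cs - ε ≤ cs + ε := by linarith
  have hcont2 : ContinuousOn (fun c : ℝ => evalCX c x p) (Set.Icc (cs - ε) (cs + ε)) :=
    (contF.comp (continuous_id.prodMk continuous_const)).continuousOn
  have hroot : ∃ c ∈ Set.Icc (cs - ε) (cs + ε), evalCX c x p = 0 := by
    rcases mul_neg_iff.mp (Set.mem_setOf_eq ▸ hx1) with ⟨hpos, hneg⟩ | ⟨hneg, hpos⟩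
    · obtain ⟨c, hcmem, hc0⟩ := intermediate_value_Icc' hab hcont2
        (Set.mem_Icc.mpr ⟨hneg.le, hpos.le⟩)
      exact ⟨c, hcmem, hc0⟩
    · obtain ⟨c, hcmem, hc0⟩ := intermediate_value_Icc hab hcont2
        (Set.mem_Icc.mpr ⟨hneg.le, hpos.le⟩)
      exact ⟨c, hcmem, hc0⟩
  obtain ⟨c, hcmem, hc0⟩ := hroot
  have hxS : x ∈ S := ⟨⟨le_trans hβx₀ hx2.1.le, hx2.2.le⟩, c, hεJ hcmem, hc0⟩
  have hxle : x ≤ β := le_csSup hScomp.bddAbove hxS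
  linarith [hx2.1]
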